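/- Global Cartan (polar) decomposition of SL(2,ℂ): for every 2×2 complex matrix M with det M = 1, there exists a unique pair (K, p) where K is in the special unitary group SU(2) and p is a 2×2 Hermitian complex matrix with trace p = 0, such that M = K · exp(p), where exp is the matrix exponential. -/

import Mathlib

open Matrix

namespace Sl2Polar
open scoped ComplexOrder

open scoped Matrix.Norms.L2Operator in
lemma exp_inj {p q : Matrix (Fin 2) (Fin 2) ℂ} (hp : IsSelfAdjoint p) (hq : IsSelfAdjoint q)
    (h : NormedSpace.exp p = NormedSpace.exp q) : p = q := by
  have h2 : NormedSpace.exp p = NormedSpace.exp q := by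
    exact h
  calc p = CFC.log (NormedSpace.exp p) := (CFC.log_exp p hp).symm
    _ = CFC.log (NormedSpace.exp q) := by rw [h2]
    _ = q := CFC.log_exp q hq

open scoped Matrix.Norms.L2Operator in
lemma exp_eq_cfc {p : Matrix (Fin 2) (Fin 2) ℂ} (hp : IsSelfAdjoint p) :
    NormedSpace.exp p = cfc Real.exp p := by
  exact (CFC.real_exp_eq_normedSpace_exp hp).symm

lemma herm_cms (M : Matrix (Fin 2) (Fin 2) ℂ) : (Mᴴ * M).IsHermitian :=
  (Matrix.posSemidef_conjTranspose_mul_self M).1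

lemma eig_nonneg (M : Matrix (Fin 2) (Fin 2) ℂ) (i : Fin 2) :
    0 ≤ (herm_cms M).eigenvalues i :=
  (Matrix.posSemidef_conjTranspose_mul_self M).eigenvalues_nonneg i

end Sl2Polar

/-- Global Cartan (polar) decomposition of `SL(2,ℂ)`: every `2 × 2`
complex matrix of determinant `1` is uniquely `K · exp(p)` with `K ∈ SU(2)` and `p`
Hermitian traceless. -/
theorem sl2_polar_decomposition (M : Matrix (Fin 2) (Fin 2) ℂ) (hM : M.det = 1) :
    ∃! Kp : Matrix.specialUnitaryGroup (Fin 2) ℂ × Matrix (Fin 2) (Fin 2) ℂ,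
      Kp.2.IsHermitian ∧ Kp.2.trace = 0 ∧
        M = (Kp.1 : Matrix (Fin 2) (Fin 2) ℂ) * NormedSpace.exp Kp.2 := by
  classical
  set A := Mᴴ * M with hAdef
  have hA : A.IsHermitian := Sl2Polar.herm_cms M
  have hA' : IsSelfAdjoint A := hA
  have hdet : A.det = 1 := by
    rw [hAdef, det_mul, det_conjTranspose, hM, star_one, one_mul]
  have hprod : ∏ i, hA.eigenvalues i = 1 := by
    have h1 := hA.det_eq_prod_eigenvalues
    rw [hdet] at h1
    have h2 : ((∏ i, hA.eigenvalues i : ℝ) : ℂ) = 1 := by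
      push_cast
      exact h1.symm
    exact_mod_cast h2
  have hpos : ∀ i, 0 < hA.eigenvalues i := by
    intro i
    rcases (Sl2Polar.eig_nonneg M i).lt_or_eq with h | h
    · exact h
    · exfalso
      have h0 : ∏ j, hA.eigenvalues j = 0 :=
        Finset.prod_eq_zero (Finset.mem_univ i) h.symm
      rw [hprod] at h0
      norm_num at h0
  have hspec : ∀ x ∈ spectrum ℝ A, 0 < x := by
    rw [hA.spectrum_real_eq_range_eigenvalues]
    rintro x ⟨i, rfl⟩
    exact hpos i
  set g : ℝ → ℝ := fun x => Real.log x / 2 with hgdef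
  have hgcont : ContinuousOn g (spectrum ℝ A) := by
    refine ContinuousOn.div_const ?_ 2
    exact Real.continuousOn_log.mono fun x hx =>
      Set.mem_compl_singleton_iff.mpr (hspec x hx).ne'
  set p : Matrix (Fin 2) (Fin 2) ℂ := cfc g A with hpdef
  have hp : IsSelfAdjoint p := cfc_predicate g A
  have hpherm : p.IsHermitian := hp
  have hexp : NormedSpace.exp p = cfc (fun x => Real.exp (g x)) A := by
    rw [Sl2Polar.exp_eq_cfc hp, hpdef,
      ← cfc_comp' Real.exp g A Real.continuous_exp.continuousOn hgcont]
  have hsq : NormedSpace.exp p * NormedSpace.exp p = A := by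
    rw [hexp, ← cfc_mul _ _ A]
    have h1 : cfc (fun x => Real.exp (g x) * Real.exp (g x)) A = cfc (id : ℝ → ℝ) A := by
      refine cfc_congr fun x hx => ?_
      rw [← Real.exp_add, hgdef]
      simp only
      rw [add_halves, Real.exp_log (hspec x hx)]
      rfl
    rw [h1, cfc_id ℝ A]
  have hsum : ∑ i, g (hA.eigenvalues i) = 0 := by
    rw [hgdef]
    simp only
    rw [← Finset.sum_div, ← Real.log_prod fun i _ => (hpos i).ne', hprod,
      Real.log_one, zero_div]
  -- unitary conjugation facts
  have hU1 : (star (hA.eigenvectorUnitary : Matrix (Fin 2) (Fin 2) ℂ)) *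
      (hA.eigenvectorUnitary : Matrix (Fin 2) (Fin 2) ℂ) = 1 :=
    Unitary.star_mul_self_of_mem (SetLike.coe_mem _)
  have hU2 : (hA.eigenvectorUnitary : Matrix (Fin 2) (Fin 2) ℂ) *
      (star (hA.eigenvectorUnitary : Matrix (Fin 2) (Fin 2) ℂ)) = 1 :=
    Unitary.mul_star_self_of_mem (SetLike.coe_mem _)
  have htrace_cfc : ∀ f : ℝ → ℝ, (cfc f A).trace = ∑ i, (f (hA.eigenvalues i) : ℂ) := by
    intro f
    rw [hA.cfc_eq f, Matrix.IsHermitian.cfc, Unitary.conjStarAlgAut_apply, Matrix.trace_mul_cycle, hU1,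
      one_mul, Matrix.trace_diagonal]
    rfl
  have hdet_cfc : ∀ f : ℝ → ℝ, (cfc f A).det = ∏ i, (f (hA.eigenvalues i) : ℂ) := by
    intro f
    rw [hA.cfc_eq f, Matrix.IsHermitian.cfc, Unitary.conjStarAlgAut_apply, det_mul, det_mul, det_diagonal]
    have h1 : (hA.eigenvectorUnitary : Matrix (Fin 2) (Fin 2) ℂ).det *
        (star (hA.eigenvectorUnitary : Matrix (Fin 2) (Fin 2) ℂ)).det = 1 := by
      rw [← det_mul, hU2, det_one]
    calc (hA.eigenvectorUnitary : Matrix (Fin 2) (Fin 2) ℂ).det *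
          (∏ i, (RCLike.ofReal ∘ f ∘ hA.eigenvalues) i) *
          (star (hA.eigenvectorUnitary : Matrix (Fin 2) (Fin 2) ℂ)).det
        = ((hA.eigenvectorUnitary : Matrix (Fin 2) (Fin 2) ℂ).det *
          (star (hA.eigenvectorUnitary : Matrix (Fin 2) (Fin 2) ℂ)).det) *
          ∏ i, (RCLike.ofReal ∘ f ∘ hA.eigenvalues) i := by ring
      _ = ∏ i, (f (hA.eigenvalues i) : ℂ) := by rw [h1, one_mul]; rfl
  have htr : p.trace = 0 := by
    rw [hpdef, htrace_cfc g]
    exact_mod_cast congrArg (fun x : ℝ => (x : ℂ)) hsum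
  have hdetp : (NormedSpace.exp p).det = 1 := by
    rw [hexp, hdet_cfc]
    have h1 : ∏ i, Real.exp (g (hA.eigenvalues i)) = 1 := by
      rw [← Real.exp_sum, hsum, Real.exp_zero]
    exact_mod_cast congrArg (fun x : ℝ => (x : ℂ)) h1
  -- the exponentials
  set expP : Matrix (Fin 2) (Fin 2) ℂ := NormedSpace.exp p with hePdef
  set expN : Matrix (Fin 2) (Fin 2) ℂ := NormedSpace.exp (-p) with heNdef
  have hNP : expN * expP = 1 := by
    rw [hePdef, heNdef, ← Matrix.exp_add_of_commute (-p) p ((Commute.refl p).neg_left),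
      neg_add_cancel, NormedSpace.exp_zero]
  have hPN : expP * expN = 1 := by
    rw [hePdef, heNdef, ← Matrix.exp_add_of_commute p (-p) ((Commute.refl p).neg_right),
      add_neg_cancel, NormedSpace.exp_zero]
  have hNherm : expN.IsHermitian := Matrix.IsHermitian.exp (hp.neg)
  have hdetN : expN.det = 1 := by
    have h1 : expN.det * expP.det = 1 := by rw [← det_mul, hNP, det_one]
    rw [hePdef, hdetp, mul_one] at h1
    exact h1
  -- the unitary factor
  have hKunit : (M * expN)ᴴ * (M * expN) = 1 := by
    rw [conjTranspose_mul, hNherm]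
    calc expN * Mᴴ * (M * expN)
        = expN * (Mᴴ * M) * expN := by simp only [mul_assoc]
      _ = expN * A * expN := by rw [← hAdef]
      _ = (expN * expP) * (expP * expN) := by rw [← hsq]; simp only [mul_assoc]
      _ = 1 := by rw [hNP, hPN, one_mul]
  have hKmem : M * expN ∈ Matrix.specialUnitaryGroup (Fin 2) ℂ := by
    rw [Matrix.mem_specialUnitaryGroup_iff]
    constructor
    · rw [Matrix.mem_unitaryGroup_iff']
      exact hKunit
    · rw [det_mul, hM, one_mul, hdetN]
  refine ⟨⟨⟨M * expN, hKmem⟩, p⟩, ⟨hpherm, htr, ?_⟩, ?_⟩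
  · show M = (M * expN) * expP
    rw [mul_assoc, hNP, mul_one]
  · rintro ⟨⟨K', hK'⟩, p'⟩ ⟨hherm', htr', heq⟩
    simp only at hherm' htr' heq
    have hSA' : IsSelfAdjoint p' := hherm'
    have hexpherm' : (NormedSpace.exp p').IsHermitian :=
      Matrix.IsHermitian.exp hherm'
    have hK'u : K'ᴴ * K' = 1 :=
      Matrix.mem_unitaryGroup_iff'.mp (Matrix.mem_specialUnitaryGroup_iff.mp hK').1
    have hA2 : NormedSpace.exp p' * NormedSpace.exp p' = A := by
      rw [hAdef, heq, conjTranspose_mul, hexpherm', mul_assoc (NormedSpace.exp p') K'ᴴ,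
        ← mul_assoc K'ᴴ K', hK'u, one_mul]
    have hee : NormedSpace.exp (p' + p') = NormedSpace.exp (p + p) := by
      rw [Matrix.exp_add_of_commute p' p' (Commute.refl p'),
        Matrix.exp_add_of_commute p p (Commute.refl p), hA2, ← hePdef, hsq]
    have hpp : p' + p' = p + p := Sl2Polar.exp_inj (hSA'.add hSA') (hp.add hp) hee
    have hp'p : p' = p := by
      have h2 : (2 : ℂ) • p' = (2 : ℂ) • p := by rw [two_smul, two_smul]; exact hpp
      exact smul_right_injective _ two_ne_zero h2
    have hK'K : K' = M * expN := by
      rw [heq, hp'p, ← hePdef, mul_assoc, hPN, mul_one]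
    exact Prod.ext (Subtype.ext hK'K) hp'p
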